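/- Let G be a finite directed graph on the vertex set {1,…,n}, let q ≥ 2 be an integer, and let C ⊆ (ZMod q)^n be a nonempty RDSS code for G over ZMod q. Then there exists an index code for G over ZMod q whose message set M has size |M| ≤ ⌈(q^n / |C|) · min{ n·ln q, 1 + ln |C| }⌉. -/

import Mathlib

open Finset in
lemma greedy_cover {X : Type*} [Fintype X] [Nonempty X] [DecidableEq X] [AddCommGroup X]
    (F : Finset X) (t : ℕ) (U : Finset X) :
    ∃ S : Finset X, S.card ≤ t ∧
      (((U.filter (fun y => ∀ v ∈ S, y - v ∉ F)).card : ℝ) ≤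
        U.card * (1 - (F.card : ℝ) / (Fintype.card X : ℝ)) ^ t) := by
  induction t generalizing U with
  | zero => exact ⟨∅, le_refl 0, by simp⟩
  | succ t ih =>
    have hNpos : (0:ℝ) < (Fintype.card X : ℝ) := by
      exact_mod_cast Fintype.card_pos
    have hr0 : (0:ℝ) ≤ 1 - (F.card : ℝ) / (Fintype.card X : ℝ) := by
      rw [sub_nonneg, div_le_one hNpos]
      exact_mod_cast F.card_le_univ
    set r : ℝ := 1 - (F.card : ℝ) / (Fintype.card X : ℝ) with hr
    have key : ∀ y : X, (univ.filter (fun v => y - v ∈ F)).card = F.card := by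
      intro y
      have himg : univ.filter (fun v => y - v ∈ F) = F.image (fun c => y - c) := by
        ext v
        simp only [mem_filter, mem_univ, true_and, mem_image]
        constructor
        · intro h; exact ⟨y - v, h, by abel⟩
        · rintro ⟨c, hc, rfl⟩; simpa using hc
      rw [himg, Finset.card_image_of_injective _ sub_right_injective]
    have hsum : ∑ v : X, (U.filter (fun y => y - v ∈ F)).card = U.card * F.card := by
      have : ∀ v : X, (U.filter (fun y => y - v ∈ F)).card
          = ∑ y ∈ U, if y - v ∈ F then 1 else 0 := fun v => Finset.card_filter _ _
      simp only [this]
      rw [Finset.sum_comm]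
      have : ∀ y ∈ U, (∑ v : X, if y - v ∈ F then 1 else 0) = F.card := by
        intro y _
        rw [← Finset.card_filter]
        exact key y
      rw [Finset.sum_congr rfl this, Finset.sum_const, smul_eq_mul]
    obtain ⟨v, -, hv⟩ := Finset.exists_max_image (univ : Finset X)
      (fun v => (U.filter (fun y => y - v ∈ F)).card) Finset.univ_nonempty
    have havg : U.card * F.card ≤ Fintype.card X * (U.filter (fun y => y - v ∈ F)).card := by
      calc U.card * F.card = ∑ w : X, (U.filter (fun y => y - w ∈ F)).card := hsum.symm
        _ ≤ ∑ _w : X, (U.filter (fun y => y - v ∈ F)).card :=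
            Finset.sum_le_sum (fun w hw => hv w hw)
        _ = Fintype.card X * (U.filter (fun y => y - v ∈ F)).card := by
            rw [Finset.sum_const, smul_eq_mul, Finset.card_univ]
    set U' := U.filter (fun y => y - v ∉ F) with hU'
    have hsplit : U'.card + (U.filter (fun y => y - v ∈ F)).card = U.card := by
      rw [hU']
      rw [Finset.filter_not, Finset.card_sdiff_of_subset (Finset.filter_subset _ _)]
      have := Finset.card_filter_le U (fun y => y - v ∈ F)
      omega
    have hU'le : (U'.card : ℝ) ≤ U.card * r := by
      have h1 : ((U.card : ℝ)) * F.card ≤ (Fintype.card X : ℝ) *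
          ((U.filter (fun y => y - v ∈ F)).card : ℝ) := by exact_mod_cast havg
      have h2 : (U'.card : ℝ) = U.card - ((U.filter (fun y => y - v ∈ F)).card : ℝ) := by
        have := hsplit
        push_cast [← this]
        ring
      rw [h2, hr]
      rw [mul_sub, mul_one]
      have : (U.card : ℝ) * ((F.card : ℝ) / (Fintype.card X : ℝ))
          ≤ ((U.filter (fun y => y - v ∈ F)).card : ℝ) := by
        rw [← mul_div_assoc, div_le_iff₀ hNpos]
        nlinarith
      linarith
    obtain ⟨S', hS'card, hS'⟩ := ih U'
    refine ⟨insert v S', ?_, ?_⟩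
    · exact (Finset.card_insert_le _ _).trans (by omega)
    · have hsub : U.filter (fun y => ∀ w ∈ insert v S', y - w ∉ F) ⊆
          U'.filter (fun y => ∀ w ∈ S', y - w ∉ F) := by
        intro y hy
        rw [Finset.mem_filter] at hy ⊢
        rw [hU', Finset.mem_filter]
        exact ⟨⟨hy.1, hy.2 v (Finset.mem_insert_self v S')⟩,
          fun w hw => hy.2 w (Finset.mem_insert_of_mem hw)⟩
      calc ((U.filter (fun y => ∀ w ∈ insert v S', y - w ∉ F)).card : ℝ)
          ≤ ((U'.filter (fun y => ∀ w ∈ S', y - w ∉ F)).card : ℝ) := by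
            exact_mod_cast Finset.card_le_card hsub
        _ ≤ U'.card * r ^ t := hS'
        _ ≤ (U.card * r) * r ^ t := mul_le_mul_of_nonneg_right hU'le (pow_nonneg hr0 t)
        _ = U.card * r ^ (t + 1) := by ring

lemma nat_le_ceil_of_lt_add_one {m : ℕ} {x : ℝ} (h : (m : ℝ) < x + 1) : m ≤ ⌈x⌉₊ := by
  by_contra hc
  push_neg at hc
  have h2 : ⌈x⌉₊ + 1 ≤ m := hc
  have h3 : x + 1 ≤ (m : ℝ) := by
    calc x + 1 ≤ (⌈x⌉₊ : ℝ) + 1 := by linarith [Nat.le_ceil x]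
      _ ≤ m := by exact_mod_cast h2
  linarith

/-- A recoverable distributed storage system (RDSS) code for the directed graph with
adjacency relation `Adj` on `Fin n`, over alphabet `A`. -/
def IsRDSS {n : ℕ} {A : Type*} (Adj : Fin n → Fin n → Prop) (C : Set (Fin n → A)) : Prop :=
  ∀ i : Fin n, ∀ x ∈ C, ∀ y ∈ C, (∀ j : Fin n, Adj i j → x j = y j) → x i = y i

/-- from a nonempty RDSS code `C` for a directed graph `G` over
`ZMod q` one gets an index code for `G` whose message set `M` satisfies
`|M| ≤ ⌈(q^n/|C|) · min(n ln q, 1 + ln |C|)⌉`. -/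
theorem stmt6 {n q : ℕ} (hn : 1 ≤ n) (hq : 2 ≤ q)
    (Adj : Fin n → Fin n → Prop) (hirr : ∀ i, ¬ Adj i i)
    (C : Set (Fin n → ZMod q)) (hC : IsRDSS Adj C) (hne : C.Nonempty) :
    ∃ (M : Type) (hFM : Fintype M)
      (f : (Fin n → ZMod q) → M)
      (g : (i : Fin n) → M → ({j : Fin n // Adj i j} → ZMod q) → ZMod q),
      (∀ y : Fin n → ZMod q, ∀ i : Fin n, g i (f y) (fun j => y j.1) = y i) ∧
      @Fintype.card M hFM ≤
        ⌈((q : ℝ) ^ n / (C.ncard : ℝ)) *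
          min ((n : ℝ) * Real.log q) (1 + Real.log (C.ncard : ℝ))⌉₊ := by
  classical
  haveI : NeZero q := ⟨by omega⟩
  have hfin : C.Finite := Set.toFinite C
  set F : Finset (Fin n → ZMod q) := hfin.toFinset with hF
  have hmemF : ∀ y : Fin n → ZMod q, y ∈ F ↔ y ∈ C := fun y => hfin.mem_toFinset
  have hKcard : C.ncard = F.card := Set.ncard_eq_toFinset_card C hfin
  have hKpos : 0 < F.card := by
    rw [Finset.card_pos]
    obtain ⟨c, hc⟩ := hne
    exact ⟨c, (hmemF c).2 hc⟩
  have hNcard : (Fintype.card (Fin n → ZMod q) : ℝ) = (q : ℝ) ^ n := by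
    rw [Fintype.card_fun]
    push_cast [ZMod.card q, Fintype.card_fin]
    ring
  -- the generic construction from a covering family S
  have main : ∀ S : Finset (Fin n → ZMod q), (∀ y : Fin n → ZMod q, ∃ v ∈ S, y - v ∈ C) →
      S.card ≤ ⌈((q : ℝ) ^ n / (C.ncard : ℝ)) *
          min ((n : ℝ) * Real.log q) (1 + Real.log (C.ncard : ℝ))⌉₊ →
      (∃ (M : Type) (hFM : Fintype M)
        (f : (Fin n → ZMod q) → M)
        (g : (i : Fin n) → M → ({j : Fin n // Adj i j} → ZMod q) → ZMod q),
        (∀ y : Fin n → ZMod q, ∀ i : Fin n, g i (f y) (fun j => y j.1) = y i) ∧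
        @Fintype.card M hFM ≤
          ⌈((q : ℝ) ^ n / (C.ncard : ℝ)) *
            min ((n : ℝ) * Real.log q) (1 + Real.log (C.ncard : ℝ))⌉₊) := by
    intro S hcov hcard
    refine ⟨{v : Fin n → ZMod q // v ∈ S}, inferInstance,
      fun y => ⟨(hcov y).choose, (hcov y).choose_spec.1⟩,
      fun i m d =>
        if h : ∃ x, x ∈ C ∧ ∀ j : {j : Fin n // Adj i j}, x j.1 = d j - m.1 j.1 then
          h.choose i + m.1 i
        else 0, ?_, ?_⟩
    · intro y i
      simp only
      set v := (hcov y).choose with hv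
      have hvC : y - v ∈ C := (hcov y).choose_spec.2
      have hex : ∃ x, x ∈ C ∧ ∀ j : {j : Fin n // Adj i j},
          x j.1 = (fun j : {j : Fin n // Adj i j} => y j.1) j - v j.1 :=
        ⟨y - v, hvC, fun j => rfl⟩
      rw [dif_pos hex]
      have hx := hex.choose_spec
      have heq : hex.choose i = (y - v) i := by
        refine hC i hex.choose hx.1 (y - v) hvC (fun j hj => ?_)
        have := hx.2 ⟨j, hj⟩
        simpa using this
      rw [heq]
      simp
      exact sub_add_cancel (y i) (v i)
    · rw [Fintype.card_coe]
      exact hcard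
  set Nn := Fintype.card (Fin n → ZMod q) with hNn
  have hNn2 : 2 ≤ Nn := by
    rw [hNn, Fintype.card_fun, ZMod.card q, Fintype.card_fin]
    calc 2 ≤ q := hq
      _ ≤ q ^ n := Nat.le_self_pow (by omega) q
  have hNr : (0:ℝ) < (Nn:ℝ) := by exact_mod_cast Nat.lt_of_lt_of_le (by norm_num) hNn2
  have hKr : (0:ℝ) < (F.card:ℝ) := by exact_mod_cast hKpos
  have hKN : (F.card:ℝ) ≤ (Nn:ℝ) := by exact_mod_cast F.card_le_univ
  have hlogN : Real.log (Nn:ℝ) = (n:ℝ) * Real.log q := by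
    rw [hNcard, Real.log_pow]
  -- a greedy covering with exponentially small leftover
  have step : ∀ t : ℕ, 1 ≤ t → ∃ S1 : Finset (Fin n → ZMod q), S1.card ≤ t ∧
      (((Finset.univ.filter (fun y => ∀ v ∈ S1, y - v ∉ F)).card : ℝ) <
        (Nn:ℝ) * Real.exp (-(F.card:ℝ)/(Nn:ℝ) * t)) := by
    intro t ht
    obtain ⟨S1, hS1card, hS1⟩ := greedy_cover F t Finset.univ
    refine ⟨S1, hS1card, lt_of_le_of_lt hS1 ?_⟩
    rw [Finset.card_univ, ← hNn]
    have hrlt : 1 - (F.card:ℝ)/(Nn:ℝ) < Real.exp (-(F.card:ℝ)/(Nn:ℝ)) := by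
      have hx : (-(F.card:ℝ)/(Nn:ℝ)) ≠ 0 := by
        apply ne_of_lt
        apply div_neg_of_neg_of_pos (by linarith) hNr
      have := Real.add_one_lt_exp hx
      rw [neg_div] at *
      linarith
    have hr0 : (0:ℝ) ≤ 1 - (F.card:ℝ)/(Nn:ℝ) := by
      rw [sub_nonneg, div_le_one hNr]; exact hKN
    have hpow : (1 - (F.card:ℝ)/(Nn:ℝ)) ^ t < Real.exp (-(F.card:ℝ)/(Nn:ℝ)) ^ t :=
      pow_lt_pow_left₀ hrlt hr0 (by omega)
    have hexp : Real.exp (-(F.card:ℝ)/(Nn:ℝ)) ^ t = Real.exp (-(F.card:ℝ)/(Nn:ℝ) * t) := by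
      rw [← Real.exp_nat_mul]; ring_nf
    rw [← hexp]
    exact mul_lt_mul_of_pos_left hpow hNr
  -- from exponent bound to division bound
  have expdiv : ∀ (b : ℝ) (t : ℕ), 0 < b → (Nn:ℝ)/(F.card:ℝ) * Real.log b ≤ t →
      (Nn:ℝ) * Real.exp (-(F.card:ℝ)/(Nn:ℝ) * t) ≤ (Nn:ℝ) / b := by
    intro b t hb hbt
    have h1 : Real.log b ≤ (F.card:ℝ)/(Nn:ℝ) * t := by
      rw [div_mul_eq_mul_div, div_le_iff₀ hKr] at hbt
      rw [div_mul_eq_mul_div, le_div_iff₀ hNr]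
      linarith
    have h2 : Real.exp (-(F.card:ℝ)/(Nn:ℝ) * t) ≤ Real.exp (-Real.log b) := by
      apply Real.exp_le_exp.2
      rw [neg_div]
      linarith
    calc (Nn:ℝ) * Real.exp (-(F.card:ℝ)/(Nn:ℝ) * t) ≤ (Nn:ℝ) * Real.exp (-Real.log b) :=
          mul_le_mul_of_nonneg_left h2 (le_of_lt hNr)
      _ = (Nn:ℝ) / b := by rw [Real.exp_neg, Real.exp_log hb, div_eq_mul_inv]
  obtain ⟨c0, hc0⟩ := hne
  set A := (n : ℝ) * Real.log q with hA
  set B := 1 + Real.log (C.ncard : ℝ) with hB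
  rcases le_or_gt A B with hAB | hBA
  · -- bound via n ln q
    set t := ⌈(Nn:ℝ)/(F.card:ℝ) * Real.log (Nn:ℝ)⌉₊ with htdef
    have ht1 : 1 ≤ t := by
      apply Nat.one_le_ceil_iff.2
      apply mul_pos (div_pos hNr hKr)
      exact Real.log_pos (by exact_mod_cast hNn2)
    obtain ⟨S, hScard, hSleft⟩ := step t ht1
    have hleft1 : ((Finset.univ.filter
        (fun y => ∀ v ∈ S, y - v ∉ F)).card : ℝ) < 1 := by
      have := expdiv (Nn:ℝ) t hNr (Nat.le_ceil _)
      have hNN : (Nn:ℝ)/(Nn:ℝ) = 1 := div_self (ne_of_gt hNr)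
      calc ((Finset.univ.filter (fun y => ∀ v ∈ S, y - v ∉ F)).card : ℝ)
          < (Nn:ℝ) * Real.exp (-(F.card:ℝ)/(Nn:ℝ) * t) := hSleft
        _ ≤ (Nn:ℝ)/(Nn:ℝ) := this
        _ = 1 := hNN
    have hempty : Finset.univ.filter (fun y : Fin n → ZMod q => ∀ v ∈ S, y - v ∉ F) = ∅ := by
      rw [← Finset.card_eq_zero]
      have : (Finset.univ.filter (fun y : Fin n → ZMod q => ∀ v ∈ S, y - v ∉ F)).card < 1 := by
        exact_mod_cast hleft1
      omega
    have hcov : ∀ y : Fin n → ZMod q, ∃ v ∈ S, y - v ∈ C := by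
      intro y
      by_contra h
      push_neg at h
      have : y ∈ Finset.univ.filter (fun y : Fin n → ZMod q => ∀ v ∈ S, y - v ∉ F) := by
        rw [Finset.mem_filter]
        exact ⟨Finset.mem_univ y, fun v hv hvF => h v hv ((hmemF _).1 hvF)⟩
      rw [hempty] at this
      exact absurd this (Finset.notMem_empty y)
    apply main S hcov
    have hmin : min A B = A := min_eq_left hAB
    have hexpr : ((q : ℝ) ^ n / (C.ncard : ℝ)) * min A B
        = (Nn:ℝ)/(F.card:ℝ) * Real.log (Nn:ℝ) := by
      rw [hmin, hKcard, ← hNcard, hlogN]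
    rw [hexpr]
    exact hScard
  · -- bound via 1 + ln |C|
    rcases eq_or_lt_of_le (Nat.succ_le_of_lt hKpos) with hK1 | hK2
    · -- |C| = 1 : take all translates
      have hcov : ∀ y : Fin n → ZMod q, ∃ v ∈ (Finset.univ : Finset (Fin n → ZMod q)),
          y - v ∈ C := fun y => ⟨y - c0, Finset.mem_univ _, by simpa using hc0⟩
      apply main Finset.univ hcov
      have hmin : min A B = B := min_eq_right (le_of_lt hBA)
      have hexpr : ((q : ℝ) ^ n / (C.ncard : ℝ)) * min A B = (Nn:ℝ) := by
        rw [hmin, hB, hKcard, ← hK1]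
        push_cast
        rw [Real.log_one]
        rw [← hNcard]
        ring
      rw [hexpr, Finset.card_univ, ← hNn, Nat.ceil_natCast]
    · -- |C| ≥ 2 : greedy then cover the leftovers individually
      have hlogK : (0:ℝ) < Real.log (F.card:ℝ) := Real.log_pos (by exact_mod_cast hK2)
      set t1 := ⌈(Nn:ℝ)/(F.card:ℝ) * Real.log (F.card:ℝ)⌉₊ with ht1def
      have ht11 : 1 ≤ t1 := Nat.one_le_ceil_iff.2 (mul_pos (div_pos hNr hKr) hlogK)
      obtain ⟨S1, hS1card, hS1left⟩ := step t1 ht11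
      set L := Finset.univ.filter (fun y : Fin n → ZMod q => ∀ v ∈ S1, y - v ∉ F) with hL
      have hLlt : (L.card : ℝ) < (Nn:ℝ)/(F.card:ℝ) := by
        calc (L.card : ℝ) < (Nn:ℝ) * Real.exp (-(F.card:ℝ)/(Nn:ℝ) * t1) := hS1left
          _ ≤ (Nn:ℝ)/(F.card:ℝ) := expdiv (F.card:ℝ) t1 hKr (Nat.le_ceil _)
      set S := S1 ∪ L.image (fun y => y - c0) with hS
      have hcov : ∀ y : Fin n → ZMod q, ∃ v ∈ S, y - v ∈ C := by
        intro y
        by_cases h : ∃ v ∈ S1, y - v ∈ C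
        · obtain ⟨v, hv, hvC⟩ := h
          exact ⟨v, Finset.mem_union_left _ hv, hvC⟩
        · push_neg at h
          have hyL : y ∈ L := by
            rw [hL, Finset.mem_filter]
            exact ⟨Finset.mem_univ y, fun v hv hvF => h v hv ((hmemF _).1 hvF)⟩
          refine ⟨y - c0, Finset.mem_union_right _ (Finset.mem_image_of_mem _ hyL), ?_⟩
          simpa using hc0
      apply main S hcov
      have hScard : (S.card : ℝ) < ((Nn:ℝ)/(F.card:ℝ) * (1 + Real.log (F.card:ℝ))) + 1 := by
        have h1 : S.card ≤ t1 + L.card := by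
          calc S.card ≤ S1.card + (L.image (fun y => y - c0)).card := Finset.card_union_le _ _
            _ ≤ t1 + L.card := Nat.add_le_add hS1card (Finset.card_image_le)
        have h2 : (t1 : ℝ) < (Nn:ℝ)/(F.card:ℝ) * Real.log (F.card:ℝ) + 1 :=
          Nat.ceil_lt_add_one (le_of_lt (mul_pos (div_pos hNr hKr) hlogK))
        have h3 : (S.card : ℝ) ≤ (t1 : ℝ) + (L.card : ℝ) := by exact_mod_cast h1
        calc (S.card : ℝ) ≤ (t1 : ℝ) + (L.card : ℝ) := h3
          _ < ((Nn:ℝ)/(F.card:ℝ) * Real.log (F.card:ℝ) + 1) + (Nn:ℝ)/(F.card:ℝ) := by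
              linarith
          _ = ((Nn:ℝ)/(F.card:ℝ) * (1 + Real.log (F.card:ℝ))) + 1 := by ring
      have hexpr : ((q : ℝ) ^ n / (C.ncard : ℝ)) * min A B
          = (Nn:ℝ)/(F.card:ℝ) * (1 + Real.log (F.card:ℝ)) := by
        rw [min_eq_right (le_of_lt hBA), hB, hKcard, ← hNcard]
      rw [hexpr]
      exact nat_le_ceil_of_lt_add_one hScard
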